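/- arXiv:1905.06064 — 3 statements merged into one kernel-verified Lean document; each statement's English description precedes it below -/
import Mathlib

section
/- Let s ≠ t be real numbers and let A(s,t) = {(x,y) ∈ ℝ² : min{x,y} < s and min{x,y} < t and s < max{x,y} and t < max{x,y}} (i.e., both s and t lie strictly between x and y). Then for any μ > 0, ∫_{A(s,t)} |x−y|^{−2−μ} d(x,y) = (2/(μ(1+μ))) · |t−s|^{−μ}. -/
open MeasureTheory Set

lemma aux_int_Ioi (x c a : ℝ) (ha : a < -1) (hx : x < c) :
    ∫ y in Ioi c, (y - x) ^ a = -(c - x) ^ (a + 1) / (a + 1) := by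
  have h := (measurePreserving_add_right volume x).setIntegral_preimage_emb
    (MeasurableEquiv.addRight x).measurableEmbedding (fun y => (y - x) ^ a) (Ioi c)
  rw [preimage_add_const_Ioi] at h
  simp only [add_sub_cancel_right] at h
  rw [← h, integral_Ioi_rpow_of_lt ha (by linarith)]

lemma aux_intOn_Ioi (x c a : ℝ) (ha : a < -1) (hx : x < c) :
    IntegrableOn (fun y => (y - x) ^ a) (Ioi c) := by
  have h := (measurePreserving_add_right volume x).integrableOn_comp_preimage
    (MeasurableEquiv.addRight x).measurableEmbedding
    (f := fun y : ℝ => (y - x) ^ a) (s := Ioi c)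
  rw [← h]
  simp only [MeasurableEquiv.coe_addRight, preimage_add_const_Ioi, Function.comp_def,
    add_sub_cancel_right]
  exact integrableOn_Ioi_rpow_of_lt ha (by linarith)

lemma aux_int_Iio (t s a : ℝ) (ha : a < -1) (h : s < t) :
    ∫ x in Iio s, (t - x) ^ a = -(t - s) ^ (a + 1) / (a + 1) := by
  have h2 := (Measure.measurePreserving_sub_left volume t).setIntegral_preimage_emb
    (MeasurableEquiv.subLeft t).measurableEmbedding (fun x => (t - x) ^ a) (Iio s)
  rw [preimage_const_sub_Iio] at h2
  simp only [sub_sub_cancel] at h2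
  rw [← h2, integral_Ioi_rpow_of_lt ha (by linarith)]

lemma aux_intOn_Iio (t s a : ℝ) (ha : a < -1) (h : s < t) :
    IntegrableOn (fun x => (t - x) ^ a) (Iio s) := by
  have h2 := (Measure.measurePreserving_sub_left volume t).integrableOn_comp_preimage
    (MeasurableEquiv.subLeft t).measurableEmbedding
    (f := fun x : ℝ => (t - x) ^ a) (s := Iio s)
  rw [← h2]
  simp only [preimage_const_sub_Iio, Function.comp_def, sub_sub_cancel]
  exact integrableOn_Ioi_rpow_of_lt ha (by linarith)

/-- integrability on the rectangle -/
lemma aux_intOn_rect (s t μ : ℝ) (hμ : 0 < μ) (hlt : s < t) :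
    IntegrableOn (fun p : ℝ × ℝ => |p.1 - p.2| ^ (-2 - μ)) (Iio s ×ˢ Ioi t) := by
  have ha : (-2 - μ : ℝ) < -1 := by linarith
  rw [IntegrableOn, Measure.volume_eq_prod, ← Measure.prod_restrict]
  have hmeas : AEStronglyMeasurable (fun p : ℝ × ℝ => |p.1 - p.2| ^ (-2 - μ))
      ((volume.restrict (Iio s)).prod (volume.restrict (Ioi t))) := by
    apply Measurable.aestronglyMeasurable; fun_prop
  rw [integrable_prod_iff hmeas]
  constructor
  · filter_upwards [ae_restrict_mem measurableSet_Iio] with x hx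
    have hxt : x < t := lt_trans hx hlt
    have : IntegrableOn (fun y => (y - x) ^ (-2 - μ)) (Ioi t) :=
      aux_intOn_Ioi x t _ ha hxt
    refine this.congr_fun (fun y hy => ?_) measurableSet_Ioi
    rw [abs_of_neg (by simp only [mem_Ioi] at hy; linarith), neg_sub]
  · have hbase : IntegrableOn (fun x : ℝ => -(t - x) ^ (-2 - μ + 1) / (-2 - μ + 1))
        (Iio s) := by
      exact ((aux_intOn_Iio t s _ (by linarith) hlt).neg).div_const _
    refine hbase.congr_fun (fun x hx => ?_) measurableSet_Iio
    simp only [mem_Iio] at hx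
    have hxt : x < t := lt_trans hx hlt
    have h1 : ∀ y ∈ Ioi t, ‖|x - y| ^ (-2 - μ)‖ = (y - x) ^ (-2 - μ) := by
      intro y hy
      simp only [mem_Ioi] at hy
      rw [Real.norm_eq_abs, abs_of_nonneg (Real.rpow_nonneg (abs_nonneg _) _),
        abs_of_neg (by linarith), neg_sub]
    rw [setIntegral_congr_fun measurableSet_Ioi h1, aux_int_Ioi x t _ ha hxt]

/-- For `s ≠ t`, the integral of `|x−y|^(−2−μ)` over the set of `(x,y)` with
`min{x,y} < s,t < max{x,y}` equals `(2/(μ(1+μ))) · |t−s|^(−μ)`. -/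
theorem integral_over_Ast (s t : ℝ) (hst : s ≠ t) (μ : ℝ) (hμ : 0 < μ) :
    ∫ p : ℝ × ℝ in {p : ℝ × ℝ | min p.1 p.2 < s ∧ min p.1 p.2 < t ∧
      s < max p.1 p.2 ∧ t < max p.1 p.2},
      |p.1 - p.2| ^ (-2 - μ) = 2 / (μ * (1 + μ)) * |t - s| ^ (-μ) := by
  wlog hlt : s < t generalizing s t
  · have h' := this t s hst.symm (hst.lt_or_gt.resolve_left hlt)
    have hset : {p : ℝ × ℝ | min p.1 p.2 < s ∧ min p.1 p.2 < t ∧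
        s < max p.1 p.2 ∧ t < max p.1 p.2} = {p : ℝ × ℝ | min p.1 p.2 < t ∧ min p.1 p.2 < s ∧
        t < max p.1 p.2 ∧ s < max p.1 p.2} := by
      ext p; simp only [mem_setOf_eq]; tauto
    rw [hset, h', abs_sub_comm]
  have ha : (-2 - μ : ℝ) < -1 := by linarith
  set f : ℝ × ℝ → ℝ := fun p => |p.1 - p.2| ^ (-2 - μ) with hf
  -- the set splits as a disjoint union of two rectangles
  have hset : {p : ℝ × ℝ | min p.1 p.2 < s ∧ min p.1 p.2 < t ∧
      s < max p.1 p.2 ∧ t < max p.1 p.2} = (Iio s ×ˢ Ioi t) ∪ (Ioi t ×ˢ Iio s) := by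
    ext ⟨x, y⟩
    simp only [mem_setOf_eq, min_lt_iff, lt_max_iff, mem_union, mem_prod, mem_Iio, mem_Ioi]
    constructor
    · rintro ⟨h1, -, -, h4⟩
      rcases h1 with h1 | h1 <;> rcases h4 with h4 | h4
      · exact absurd (lt_trans (lt_trans h1 hlt) h4) (lt_irrefl x)
      · exact Or.inl ⟨h1, h4⟩
      · exact Or.inr ⟨h4, h1⟩
      · exact absurd (lt_trans (lt_trans h1 hlt) h4) (lt_irrefl y)
    · rintro (⟨h1, h2⟩ | ⟨h1, h2⟩)
      · exact ⟨Or.inl h1, Or.inl (h1.trans hlt), Or.inr (hlt.trans h2), Or.inr h2⟩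
      · exact ⟨Or.inr h2, Or.inr (h2.trans hlt), Or.inl (hlt.trans h1), Or.inl h1⟩
  have hdisj : Disjoint (Iio s ×ˢ Ioi t) ((Ioi t ×ˢ Iio s) : Set (ℝ × ℝ)) := by
    rw [Set.disjoint_left]
    rintro ⟨x, y⟩ ⟨hx1, -⟩ ⟨hx2, -⟩
    simp only [mem_Iio, mem_Ioi] at hx1 hx2
    linarith
  have hint1 : IntegrableOn f (Iio s ×ˢ Ioi t) := aux_intOn_rect s t μ hμ hlt
  -- integrability on the swapped rectangle
  have hswap_fun : (f ∘ Prod.swap) = f := by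
    funext p; simp only [hf, Function.comp_apply, Prod.fst_swap, Prod.snd_swap, abs_sub_comm]
  have hint2 : IntegrableOn f (Ioi t ×ˢ Iio s) := by
    have h2 := (Measure.measurePreserving_swap (μ := (volume : Measure ℝ))
      (ν := (volume : Measure ℝ))).integrableOn_comp_preimage
      MeasurableEquiv.prodComm.measurableEmbedding (f := f) (s := Iio s ×ˢ Ioi t)
    have hint1' : IntegrableOn f (Iio s ×ˢ Ioi t) (volume.prod volume) := by
      rwa [← Measure.volume_eq_prod]
    have h3 := h2.2 hint1'
    rw [hswap_fun, preimage_swap_prod] at h3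
    rwa [IntegrableOn, Measure.volume_eq_prod]
  -- the two rectangle integrals agree
  have hJ : ∫ p in (Ioi t ×ˢ Iio s), f p = ∫ p in (Iio s ×ˢ Ioi t), f p := by
    have h2 := (Measure.measurePreserving_swap (μ := (volume : Measure ℝ))
      (ν := (volume : Measure ℝ))).setIntegral_preimage_emb
      MeasurableEquiv.prodComm.measurableEmbedding f (Iio s ×ˢ Ioi t)
    rw [preimage_swap_prod] at h2
    calc ∫ p in (Ioi t ×ˢ Iio s), f p
        = ∫ p in (Ioi t ×ˢ Iio s), (f ∘ Prod.swap) p ∂(volume.prod volume) := by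
          rw [hswap_fun, ← Measure.volume_eq_prod]
      _ = ∫ p in (Iio s ×ˢ Ioi t), f p ∂(volume.prod volume) := h2
      _ = ∫ p in (Iio s ×ˢ Ioi t), f p := by rw [← Measure.volume_eq_prod]
  -- compute the rectangle integral
  have hI : ∫ p in (Iio s ×ˢ Ioi t), f p = (t - s) ^ (-μ) / (μ * (1 + μ)) := by
    have hsplit : ∫ p in (Iio s ×ˢ Ioi t), f p
        = ∫ x in Iio s, ∫ y in Ioi t, f (x, y) := by
      rw [Measure.volume_eq_prod]
      apply setIntegral_prod
      rwa [← Measure.volume_eq_prod]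
    rw [hsplit]
    have hinner : ∀ x ∈ Iio s, ∫ y in Ioi t, f (x, y)
        = -(t - x) ^ (-2 - μ + 1) / (-2 - μ + 1) := by
      intro x hx
      simp only [mem_Iio] at hx
      have hxt : x < t := lt_trans hx hlt
      have h1 : ∀ y ∈ Ioi t, f (x, y) = (y - x) ^ (-2 - μ) := by
        intro y hy
        simp only [mem_Ioi] at hy
        simp only [hf]
        rw [abs_of_neg (by linarith), neg_sub]
      rw [setIntegral_congr_fun measurableSet_Ioi h1, aux_int_Ioi x t _ ha hxt]
    rw [setIntegral_congr_fun measurableSet_Iio hinner]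
    simp only [integral_div, integral_neg]
    rw [aux_int_Iio t s _ (by linarith) hlt]
    have h1 : (-2 - μ + 1 : ℝ) = -1 - μ := by ring
    have h2 : (-2 - μ + 1 + 1 : ℝ) = -μ := by ring
    rw [h1, show (-1 - μ + 1 : ℝ) = -μ by ring]
    have hμ1 : (1 + μ : ℝ) ≠ 0 := by linarith
    have hμ0 : (μ : ℝ) ≠ 0 := ne_of_gt hμ
    have hμ2 : (-1 - μ : ℝ) ≠ 0 := by linarith
    field_simp
    ring
  rw [hset, setIntegral_union hdisj (measurableSet_Ioi.prod measurableSet_Iio) hint1 hint2]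
  rw [hJ, hI, abs_of_pos (by linarith : (0:ℝ) < t - s)]
  field_simp
  ring
end

section
/- Let γ: ℝ/ℤ → ℝ^d be an arc-length parametrized C¹ curve. Then for all x ≠ y (with |x−y| interpreted as arclength parameter distance), |γ(x)−γ(y)|²/|x−y|² = 1 − (1/2)·⨍₀¹⨍₀¹ |γ'(x+θ₁(y−x)) − γ'(x+θ₂(y−x))|² dθ₁ dθ₂. In particular, if |γ'(s)−γ'(t)| ≤ C|s−t|^β for all s,t, then |γ(x)−γ(y)|²/|x−y|² ≥ 1 − C²|x−y|^{2β}. -/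
open MeasureTheory

variable {d : ℕ}

-- integrability of the squared-difference integrand in one variable
private lemma sqdiff_int (g : ℝ → EuclideanSpace ℝ (Fin d)) (hg : Measurable g)
    (hu : ∀ s, ‖g s‖ = 1) (x y θ₁ : ℝ) :
    IntegrableOn (fun θ₂ => ‖g (x + θ₁ * (y - x)) - g (x + θ₂ * (y - x))‖ ^ 2)
      (Set.Ioc (0:ℝ) 1) volume := by
  have hm : Measurable fun θ₂ : ℝ => ‖g (x + θ₁ * (y - x)) - g (x + θ₂ * (y - x))‖ ^ 2 := by
    have : Measurable fun θ₂ : ℝ => g (x + θ₂ * (y - x)) :=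
      hg.comp (measurable_const.add (measurable_id.mul_const _))
    exact ((measurable_const.sub this).norm).pow_const 2
  have hc : IntegrableOn (fun _ : ℝ => (4:ℝ)) (Set.Ioc (0:ℝ) 1) volume :=
    integrableOn_const measure_Ioc_lt_top.ne
  refine hc.mono' hm.aestronglyMeasurable (ae_of_all _ fun θ₂ => ?_)
  have h2 : ‖g (x + θ₁ * (y - x)) - g (x + θ₂ * (y - x))‖ ≤ 2 := by
    calc ‖g (x + θ₁ * (y - x)) - g (x + θ₂ * (y - x))‖
        ≤ ‖g (x + θ₁ * (y - x))‖ + ‖g (x + θ₂ * (y - x))‖ := norm_sub_le _ _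
      _ = 2 := by rw [hu, hu]; norm_num
  have h0 : (0:ℝ) ≤ ‖g (x + θ₁ * (y - x)) - g (x + θ₂ * (y - x))‖ := norm_nonneg _
  rw [Real.norm_eq_abs, abs_of_nonneg (by positivity)]
  nlinarith

private lemma sqdiff_int2 (g : ℝ → EuclideanSpace ℝ (Fin d)) (hg : Measurable g)
    (hu : ∀ s, ‖g s‖ = 1) (x y : ℝ) :
    IntegrableOn (fun θ₁ => ∫ θ₂ in Set.Ioc (0:ℝ) 1,
      ‖g (x + θ₁ * (y - x)) - g (x + θ₂ * (y - x))‖ ^ 2) (Set.Ioc (0:ℝ) 1) volume := by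
  have hm : StronglyMeasurable fun p : ℝ × ℝ =>
      ‖g (x + p.1 * (y - x)) - g (x + p.2 * (y - x))‖ ^ 2 := by
    have h1 : Measurable fun p : ℝ × ℝ => g (x + p.1 * (y - x)) :=
      hg.comp (measurable_const.add (measurable_fst.mul_const _))
    have h2 : Measurable fun p : ℝ × ℝ => g (x + p.2 * (y - x)) :=
      hg.comp (measurable_const.add (measurable_snd.mul_const _))
    exact (((h1.sub h2).norm).pow_const 2).stronglyMeasurable
  have hsm := hm.integral_prod_right' (ν := volume.restrict (Set.Ioc (0:ℝ) 1))
  have hc : IntegrableOn (fun _ : ℝ => (4:ℝ)) (Set.Ioc (0:ℝ) 1) volume :=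
    integrableOn_const measure_Ioc_lt_top.ne
  refine hc.mono' hsm.aestronglyMeasurable (ae_of_all _ fun θ₁ => ?_)
  have hb : ‖∫ θ₂ in Set.Ioc (0:ℝ) 1,
      ‖g (x + θ₁ * (y - x)) - g (x + θ₂ * (y - x))‖ ^ 2‖ ≤ 4 * (volume (Set.Ioc (0:ℝ) 1)).toReal := by
    refine norm_setIntegral_le_of_norm_le_const measure_Ioc_lt_top (fun θ₂ _ => ?_)
    · have h2 : ‖g (x + θ₁ * (y - x)) - g (x + θ₂ * (y - x))‖ ≤ 2 := by
        calc ‖g (x + θ₁ * (y - x)) - g (x + θ₂ * (y - x))‖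
            ≤ ‖g (x + θ₁ * (y - x))‖ + ‖g (x + θ₂ * (y - x))‖ := norm_sub_le _ _
          _ = 2 := by rw [hu, hu]; norm_num
      have h0 : (0:ℝ) ≤ ‖g (x + θ₁ * (y - x)) - g (x + θ₂ * (y - x))‖ := norm_nonneg _
      rw [Real.norm_eq_abs, abs_of_nonneg (by positivity)]
      nlinarith
  simpa [Real.volume_Ioc] using hb

private lemma const_int : IntegrableOn (fun _ : ℝ => (1:ℝ)) (Set.Ioc (0:ℝ) 1) volume :=
  integrableOn_const measure_Ioc_lt_top.ne

private lemma chord_key (γ g : ℝ → EuclideanSpace ℝ (Fin d))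
    (hderiv : ∀ x, HasDerivAt γ (g x) x) (hunit : ∀ s, ‖g s‖ = 1)
    (hg : Measurable g) (x y : ℝ) (hxy : x ≠ y) :
    ‖γ x - γ y‖ ^ 2 / |x - y| ^ 2 =
      1 - (1 / 2) * ∫ θ₁ in (0:ℝ)..1, ∫ θ₂ in (0:ℝ)..1,
        ‖g (x + θ₁ * (y - x)) - g (x + θ₂ * (y - x))‖ ^ 2 := by
  set h : ℝ → EuclideanSpace ℝ (Fin d) := fun θ => g (x + θ * (y - x)) with hh
  show ‖γ x - γ y‖ ^ 2 / |x - y| ^ 2 =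
      1 - (1 / 2) * ∫ θ₁ in (0:ℝ)..1, ∫ θ₂ in (0:ℝ)..1, ‖h θ₁ - h θ₂‖ ^ 2
  have hhm : Measurable h := hg.comp (measurable_const.add (measurable_id.mul_const _))
  have hhu : ∀ θ : ℝ, ‖h θ‖ = 1 := fun θ => hunit _
  have hhint : IntegrableOn h (Set.Ioc (0:ℝ) 1) volume := by
    refine const_int.mono' hhm.aestronglyMeasurable (ae_of_all _ fun θ => ?_)
    simp [hhu]
  -- FTC
  have hgint : IntervalIntegrable g volume x y := by
    refine (intervalIntegrable_const (c := (1:ℝ))).mono_fun hg.aestronglyMeasurable.restrict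
      (ae_of_all _ fun s => ?_)
    simp [hunit]
  have hftc : ∫ t in x..y, g t = γ y - γ x :=
    intervalIntegral.integral_eq_sub_of_hasDerivAt (fun s _ => hderiv s) hgint
  have hIeq : γ y - γ x = (y - x) • ∫ θ in Set.Ioc (0:ℝ) 1, h θ := by
    have hsub := intervalIntegral.smul_integral_comp_mul_add (a := (0:ℝ)) (b := 1) g (y-x) x
    have e1 : (∫ θ in (0:ℝ)..1, g ((y-x) * θ + x)) = ∫ θ in (0:ℝ)..1, h θ := by
      refine intervalIntegral.integral_congr fun θ _ => ?_
      rw [hh]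
      norm_num
      ring_nf
    have e2 : (∫ θ in (0:ℝ)..1, h θ) = ∫ θ in Set.Ioc (0:ℝ) 1, h θ :=
      intervalIntegral.integral_of_le zero_le_one
    rw [e1, e2] at hsub
    have eb : (y - x) * 0 + x = x := by ring
    have eb2 : (y - x) * 1 + x = y := by ring
    rw [eb, eb2] at hsub
    rw [← hftc, ← hsub]
  -- LHS simplification
  have habs : |x - y| ≠ 0 := fun hc => hxy (by rwa [abs_eq_zero, sub_eq_zero] at hc)
  have hnorm : ‖γ x - γ y‖ = |x - y| * ‖∫ θ in Set.Ioc (0:ℝ) 1, h θ‖ := by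
    have e : γ x - γ y = -((y - x) • ∫ θ in Set.Ioc (0:ℝ) 1, h θ) := by rw [← hIeq]; abel
    rw [e, norm_neg, norm_smul, Real.norm_eq_abs, abs_sub_comm]
  have hLHS : ‖γ x - γ y‖ ^ 2 / |x - y| ^ 2 = ‖∫ θ in Set.Ioc (0:ℝ) 1, h θ‖ ^ 2 := by
    rw [hnorm, mul_pow, mul_comm, mul_div_assoc, div_self (pow_ne_zero _ habs), mul_one]
  rw [hLHS]
  simp only [intervalIntegral.integral_of_le (zero_le_one (α := ℝ))]
  -- inner product expansion
  have key2 : ∀ v : EuclideanSpace ℝ (Fin d),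
      (inner ℝ v (∫ θ in Set.Ioc (0:ℝ) 1, h θ) : ℝ) = ∫ θ in Set.Ioc (0:ℝ) 1, (inner ℝ v (h θ) : ℝ) :=
    fun v => (integral_inner hhint v).symm
  have hIsq : ‖∫ θ in Set.Ioc (0:ℝ) 1, h θ‖ ^ 2
      = ∫ θ₁ in Set.Ioc (0:ℝ) 1, ∫ θ₂ in Set.Ioc (0:ℝ) 1, (inner ℝ (h θ₁) (h θ₂) : ℝ) := by
    rw [← real_inner_self_eq_norm_sq, key2]
    refine integral_congr_ae (ae_of_all _ fun θ₁ => ?_)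
    show (inner ℝ (∫ θ in Set.Ioc (0:ℝ) 1, h θ) (h θ₁) : ℝ) = ∫ θ₂ in Set.Ioc (0:ℝ) 1, (inner ℝ (h θ₁) (h θ₂) : ℝ)
    rw [real_inner_comm, key2 (h θ₁)]
  rw [hIsq]
  have hinner : ∀ θ₁ θ₂ : ℝ, (inner ℝ (h θ₁) (h θ₂) : ℝ) = 1 - (1/2) * ‖h θ₁ - h θ₂‖ ^ 2 := by
    intro θ₁ θ₂
    have hns := norm_sub_sq_real (h θ₁) (h θ₂)
    rw [hhu, hhu] at hns
    linarith
  have hDint : ∀ θ₁ : ℝ, IntegrableOn (fun θ₂ => ‖h θ₁ - h θ₂‖ ^ 2) (Set.Ioc (0:ℝ) 1) volume :=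
    fun θ₁ => sqdiff_int g hg hunit x y θ₁
  have hFint : IntegrableOn (fun θ₁ => ∫ θ₂ in Set.Ioc (0:ℝ) 1, ‖h θ₁ - h θ₂‖ ^ 2)
      (Set.Ioc (0:ℝ) 1) volume := sqdiff_int2 g hg hunit x y
  have hsplit : ∀ θ₁ : ℝ, (∫ θ₂ in Set.Ioc (0:ℝ) 1, (inner ℝ (h θ₁) (h θ₂) : ℝ))
      = 1 - (1/2) * ∫ θ₂ in Set.Ioc (0:ℝ) 1, ‖h θ₁ - h θ₂‖ ^ 2 := by
    intro θ₁
    rw [integral_congr_ae (ae_of_all _ fun θ₂ => hinner θ₁ θ₂),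
      integral_sub const_int ((hDint θ₁).const_mul _), MeasureTheory.integral_const_mul]
    simp [Real.volume_Ioc]
  rw [integral_congr_ae (ae_of_all _ fun θ₁ => hsplit θ₁),
    integral_sub const_int (hFint.const_mul _), MeasureTheory.integral_const_mul]
  simp [Real.volume_Ioc]

/-- For an arc-length parametrized `C¹` curve `γ` with derivative `g` (`‖g‖ ≡ 1`):
`‖γ(x)−γ(y)‖²/|x−y|² = 1 − ½ ∫₀¹∫₀¹ ‖g(x+θ₁(y−x)) − g(x+θ₂(y−x))‖² dθ₁ dθ₂`,
and if `g` is `β`-Hölder with constant `C` then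
`‖γ(x)−γ(y)‖²/|x−y|² ≥ 1 − C²|x−y|^{2β}`. -/
theorem chord_arc_identity (d : ℕ) (γ g : ℝ → EuclideanSpace ℝ (Fin d))
    (hderiv : ∀ x, HasDerivAt γ (g x) x) (hunit : ∀ x, ‖g x‖ = 1) :
    (∀ x y : ℝ, x ≠ y →
      ‖γ x - γ y‖ ^ 2 / |x - y| ^ 2 =
        1 - (1 / 2) *
          ∫ θ₁ in (0:ℝ)..1, ∫ θ₂ in (0:ℝ)..1,
            ‖g (x + θ₁ * (y - x)) - g (x + θ₂ * (y - x))‖ ^ 2) ∧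
    ∀ C β : ℝ, (∀ s t : ℝ, ‖g s - g t‖ ≤ C * |s - t| ^ β) →
      ∀ x y : ℝ, x ≠ y →
        1 - C ^ 2 * |x - y| ^ (2 * β) ≤ ‖γ x - γ y‖ ^ 2 / |x - y| ^ 2 := by
  have hg : Measurable g := by
    have hgd : g = deriv γ := funext fun s => ((hderiv s).deriv).symm
    rw [hgd]; exact measurable_deriv γ
  refine ⟨fun x y hxy => chord_key γ g hderiv hunit hg x y hxy, ?_⟩
  intro C β hH x y hxy
  have hC : 0 ≤ C := by
    have h01 := hH 0 1
    have e : |(0:ℝ) - 1| = 1 := by norm_num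
    rw [e, Real.one_rpow, mul_one] at h01
    exact le_trans (norm_nonneg _) h01
  rw [chord_key γ g hderiv hunit hg x y hxy]
  have habs0 : (0:ℝ) < |x - y| := abs_pos.mpr (sub_ne_zero.mpr hxy)
  have hKnn : 0 ≤ C ^ 2 * |x - y| ^ (2 * β) :=
    mul_nonneg (sq_nonneg C) (Real.rpow_nonneg (abs_nonneg _) _)
  rcases le_or_gt 0 β with hβ | hβ
  · -- Hölder exponent nonnegative
    set K : ℝ := C ^ 2 * |x - y| ^ (2 * β) with hK
    have hpt : ∀ θ₁ θ₂ : ℝ, θ₁ ∈ Set.Icc (0:ℝ) 1 → θ₂ ∈ Set.Icc (0:ℝ) 1 →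
        ‖g (x + θ₁ * (y - x)) - g (x + θ₂ * (y - x))‖ ^ 2 ≤ K := by
      intro θ₁ θ₂ h1 h2
      have hd : |(x + θ₁ * (y - x)) - (x + θ₂ * (y - x))| ≤ |x - y| := by
        have e : (x + θ₁ * (y - x)) - (x + θ₂ * (y - x)) = (θ₁ - θ₂) * (y - x) := by ring
        rw [e, abs_mul, abs_sub_comm x y]
        have h12 : |θ₁ - θ₂| ≤ 1 := by
          rw [abs_le]
          constructor <;> linarith [h1.1, h1.2, h2.1, h2.2]
        nlinarith [abs_nonneg (y - x)]
      have hle : ‖g (x + θ₁ * (y - x)) - g (x + θ₂ * (y - x))‖ ≤ C * |x - y| ^ β :=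
        (hH _ _).trans (mul_le_mul_of_nonneg_left (Real.rpow_le_rpow (abs_nonneg _) hd hβ) hC)
      have hsq := pow_le_pow_left₀ (norm_nonneg _) hle 2
      refine hsq.trans_eq ?_
      rw [mul_pow, ← Real.rpow_natCast (|x - y| ^ β) 2, ← Real.rpow_mul (abs_nonneg _)]
      rw [hK]
      push_cast
      rw [mul_comm β 2]
    have hKint : IntegrableOn (fun _ : ℝ => K) (Set.Ioc (0:ℝ) 1) volume :=
      integrableOn_const measure_Ioc_lt_top.ne
    have hinner_le : ∀ θ₁ : ℝ, θ₁ ∈ Set.Icc (0:ℝ) 1 →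
        (∫ θ₂ in Set.Ioc (0:ℝ) 1, ‖g (x + θ₁ * (y - x)) - g (x + θ₂ * (y - x))‖ ^ 2) ≤ K := by
      intro θ₁ h1
      have hm := setIntegral_mono_on (sqdiff_int g hg hunit x y θ₁) hKint measurableSet_Ioc
        (fun θ₂ h2 => hpt θ₁ θ₂ h1 (Set.Ioc_subset_Icc_self h2))
      calc (∫ θ₂ in Set.Ioc (0:ℝ) 1, ‖g (x + θ₁ * (y - x)) - g (x + θ₂ * (y - x))‖ ^ 2)
          ≤ ∫ _θ₂ in Set.Ioc (0:ℝ) 1, K := hm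
        _ = K := by simp [Real.volume_Ioc]
    have houter : (∫ θ₁ in Set.Ioc (0:ℝ) 1, ∫ θ₂ in Set.Ioc (0:ℝ) 1,
        ‖g (x + θ₁ * (y - x)) - g (x + θ₂ * (y - x))‖ ^ 2) ≤ K := by
      have hm := setIntegral_mono_on (sqdiff_int2 g hg hunit x y) hKint measurableSet_Ioc
        (fun θ₁ h1 => hinner_le θ₁ (Set.Ioc_subset_Icc_self h1))
      calc (∫ θ₁ in Set.Ioc (0:ℝ) 1, ∫ θ₂ in Set.Ioc (0:ℝ) 1,
            ‖g (x + θ₁ * (y - x)) - g (x + θ₂ * (y - x))‖ ^ 2)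
          ≤ ∫ _θ₁ in Set.Ioc (0:ℝ) 1, K := hm
        _ = K := by simp [Real.volume_Ioc]
    simp only [intervalIntegral.integral_of_le (zero_le_one (α := ℝ))]
    have hnn : (0:ℝ) ≤ ∫ θ₁ in Set.Ioc (0:ℝ) 1, ∫ θ₂ in Set.Ioc (0:ℝ) 1,
        ‖g (x + θ₁ * (y - x)) - g (x + θ₂ * (y - x))‖ ^ 2 :=
      setIntegral_nonneg measurableSet_Ioc fun θ₁ _ =>
        setIntegral_nonneg measurableSet_Ioc fun θ₂ _ => by positivity
    linarith
  · -- negative exponent : g is constant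
    have hconst : ∀ s t : ℝ, g s = g t := by
      intro s t
      have h0 : Filter.Tendsto (fun R : ℝ => R ^ β) Filter.atTop (nhds 0) := by
        have ht := tendsto_rpow_neg_atTop (y := -β) (by linarith)
        simpa using ht
      have hlim : Filter.Tendsto (fun R : ℝ => C * R ^ β + C * R ^ β) Filter.atTop (nhds 0) := by
        simpa using (h0.const_mul C).add (h0.const_mul C)
      have hev : ∀ᶠ R : ℝ in Filter.atTop, ‖g s - g t‖ ≤ C * R ^ β + C * R ^ β := by
        filter_upwards [Filter.eventually_ge_atTop (1:ℝ)] with R hR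
        set u : ℝ := max s t + R with hu
        have hRpos : (0:ℝ) < R := lt_of_lt_of_le one_pos hR
        have hsu : R ≤ |s - u| := by
          have h1 : s ≤ u := by
            have := le_max_left s t; simp only [hu]; linarith
          rw [abs_sub_comm, abs_of_nonneg (by linarith)]
          have := le_max_left s t
          simp only [hu]; linarith
        have htu : R ≤ |u - t| := by
          have h1 : t ≤ u := by
            have := le_max_right s t; simp only [hu]; linarith
          rw [abs_of_nonneg (by linarith)]
          have := le_max_right s t
          simp only [hu]; linarith
        have e : g s - g t = (g s - g u) + (g u - g t) := by abel
        calc ‖g s - g t‖ = ‖(g s - g u) + (g u - g t)‖ := by rw [e]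
          _ ≤ ‖g s - g u‖ + ‖g u - g t‖ := norm_add_le _ _
          _ ≤ C * |s - u| ^ β + C * |u - t| ^ β := add_le_add (hH s u) (hH u t)
          _ ≤ C * R ^ β + C * R ^ β := by
              have h1 : |s - u| ^ β ≤ R ^ β :=
                Real.rpow_le_rpow_of_nonpos hRpos hsu hβ.le
              have h2 : |u - t| ^ β ≤ R ^ β :=
                Real.rpow_le_rpow_of_nonpos hRpos htu hβ.le
              exact add_le_add (mul_le_mul_of_nonneg_left h1 hC)
                (mul_le_mul_of_nonneg_left h2 hC)
      have hle0 : ‖g s - g t‖ ≤ 0 := ge_of_tendsto hlim hev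
      exact sub_eq_zero.mp (norm_le_zero_iff.mp hle0)
    have hz : ∀ a b : ℝ, g a - g b = 0 := fun a b => sub_eq_zero.mpr (hconst a b)
    simp only [hz, norm_zero]
    norm_num
    linarith
end

section
/- Let γ: ℝ/ℤ → ℝ³ be parametrized by arc-length (|γ'| ≡ 1). Then for all non-antipodal x, y ∈ ℝ/ℤ: |γ(x)−γ(y)|²/ρ(x,y)² = 1 − (1/2)·⨍_x^y⨍_x^y |γ'(s)−γ'(t)|² ds dt, where ρ(x,y) is the distance on ℝ/ℤ and ⨍_x^y denotes the mean value over the shortest arc from x to y. Consequently, (1/|γ(x)−γ(y)|^α − 1/D_γ(x,y)^α)^{p/2} = ρ(x,y)^{−αp/2}·F(⟨γ',γ'⟩(x,y), 1, D_γ(x,y)/ρ(x,y)) where F(a,b,c) = ((b − a/2)^{−α/2} − c^{−α})^{p/2} and ⟨γ',γ'⟩(x,y) = ⨍_x^y⨍_x^y |γ'(s)−γ'(t)|² ds dt, so that the O'hara energy O^{α,p}(γ) equals the tangent-point energy Ẽ^{α,p}(γ'). -/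
open MeasureTheory

/-- The Lagrangian `F(a,b,c) = ((b − a/2)^(−α/2) − c^(−α))^(p/2)`. -/
noncomputable def FLag (α p a b c : ℝ) : ℝ :=
  ((b - a / 2) ^ (-(α / 2)) - c ^ (-α)) ^ (p / 2)

/-- `rpow` distributes over a product when the left factor is positive
(the right factor may be negative). -/
private lemma mul_rpow_left {s : ℝ} (hs : 0 < s) (B q : ℝ) :
    (s * B) ^ q = s ^ q * B ^ q := by
  rcases lt_trichotomy B 0 with hB | hB | hB
  · have hsB : s * B < 0 := mul_neg_of_pos_of_neg hs hB
    rw [Real.rpow_def_of_neg hsB, Real.rpow_def_of_neg hB,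
      Real.log_mul (ne_of_gt hs) (ne_of_lt hB), add_mul, Real.exp_add,
      Real.rpow_def_of_pos hs]
    ring
  · subst hB
    rcases eq_or_ne q 0 with h | h
    · simp [h]
    · simp [Real.zero_rpow h]
  · exact Real.mul_rpow hs.le hB.le

/-- A bounded strongly measurable real function is interval integrable. -/
private lemma bdd_intInt (f : ℝ → ℝ) (C : ℝ) (hf : StronglyMeasurable f)
    (hC : ∀ t, |f t| ≤ C) (a b : ℝ) : IntervalIntegrable f volume a b := by
  rw [intervalIntegrable_iff]
  refine (integrableOn_const ?_).mono'
    hf.aestronglyMeasurable.restrict (ae_of_all _ (by simpa using hC))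
  exact measure_Ioc_lt_top.ne

/-- A unit-speed derivative field is interval integrable. -/
private lemma g_intInt (g : ℝ → EuclideanSpace ℝ (Fin 3)) (hg : StronglyMeasurable g)
    (hunit : ∀ x, ‖g x‖ = 1) (a b : ℝ) : IntervalIntegrable g volume a b := by
  rw [intervalIntegrable_iff]
  refine Integrable.mono' (g := fun _ : ℝ => (1:ℝ))
    (integrableOn_const measure_Ioc_lt_top.ne)
    hg.aestronglyMeasurable.restrict (ae_of_all _ fun t => ?_)
  rw [hunit t]

/-- The chord-arc identity for an arclength parametrized curve. -/
private lemma chord_sq (γ g : ℝ → EuclideanSpace ℝ (Fin 3))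
    (hg : StronglyMeasurable g)
    (hderiv : ∀ x, HasDerivAt γ (g x) x) (hunit : ∀ x, ‖g x‖ = 1)
    {x y : ℝ} (hxy : x < y) :
    ‖γ y - γ x‖ ^ 2 =
      (y - x) ^ 2 - (1 / 2) * ∫ s in x..y, ∫ t in x..y, ‖g s - g t‖ ^ 2 := by
  have hgi := g_intInt g hg hunit
  have hc : (∫ t in x..y, g t) = γ y - γ x :=
    intervalIntegral.integral_eq_sub_of_hasDerivAt (fun t _ => hderiv t) (hgi x y)
  set c : EuclideanSpace ℝ (Fin 3) := ∫ t in x..y, g t with hcdef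
  have hinner : ∀ v : EuclideanSpace ℝ (Fin 3),
      (∫ t in x..y, (inner ℝ v (g t) : ℝ)) = inner ℝ v c := by
    intro v
    rw [hcdef, intervalIntegral.integral_of_le hxy.le,
      intervalIntegral.integral_of_le hxy.le, integral_inner (hgi x y).1]
  have hinner_int : ∀ (v : EuclideanSpace ℝ (Fin 3)) (a b : ℝ),
      IntervalIntegrable (fun t => (inner ℝ v (g t) : ℝ)) volume a b := by
    intro v a b
    refine bdd_intInt _ ‖v‖ (stronglyMeasurable_const.inner hg) (fun t => ?_) a b
    calc |(inner ℝ v (g t) : ℝ)| ≤ ‖v‖ * ‖g t‖ := abs_real_inner_le_norm v (g t)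
      _ = ‖v‖ := by rw [hunit t, mul_one]
  have hin : ∀ s : ℝ, (∫ t in x..y, ‖g s - g t‖ ^ 2)
      = 2 * (y - x) - 2 * (inner ℝ (g s) c : ℝ) := by
    intro s
    have hpt : ∀ t, ‖g s - g t‖ ^ 2 = 2 - 2 * (inner ℝ (g s) (g t) : ℝ) := by
      intro t
      rw [norm_sub_sq_real, hunit, hunit]
      ring
    rw [intervalIntegral.integral_congr (g := fun t => 2 - 2 * (inner ℝ (g s) (g t) : ℝ))
        (fun t _ => hpt t),
      intervalIntegral.integral_sub intervalIntegrable_const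
        ((hinner_int (g s) x y).const_mul 2),
      intervalIntegral.integral_const, intervalIntegral.integral_const_mul, hinner (g s)]
    rw [smul_eq_mul]
    ring
  have houter : (∫ s in x..y, ∫ t in x..y, ‖g s - g t‖ ^ 2)
      = 2 * (y - x) ^ 2 - 2 * ‖c‖ ^ 2 := by
    rw [intervalIntegral.integral_congr
        (g := fun s => 2 * (y - x) - 2 * (inner ℝ (g s) c : ℝ)) (fun s _ => hin s)]
    have heq : (fun s => (inner ℝ (g s) c : ℝ)) = fun s => (inner ℝ c (g s) : ℝ) :=
      funext fun s => real_inner_comm _ _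
    have h2' : IntervalIntegrable (fun s => (inner ℝ (g s) c : ℝ)) volume x y := by
      rw [heq]; exact hinner_int c x y
    rw [intervalIntegral.integral_sub intervalIntegrable_const (h2'.const_mul 2),
      intervalIntegral.integral_const, intervalIntegral.integral_const_mul]
    have hcc : (∫ s in x..y, (inner ℝ (g s) c : ℝ)) = (inner ℝ c c : ℝ) := by
      rw [show (∫ s in x..y, (inner ℝ (g s) c : ℝ)) = ∫ s in x..y, (inner ℝ c (g s) : ℝ) from by
        rw [heq]]
      exact hinner c
    rw [hcc, real_inner_self_eq_norm_sq, smul_eq_mul]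
    ring
  rw [houter, ← hc]
  ring

/-- For an arc-length parametrized closed curve `γ : ℝ/ℤ → ℝ³` (1-periodic, `‖γ'‖ ≡ 1`)
and non-antipodal points (representatives with `0 < |x−y| < 1/2`, so that the circle
distance is `ρ(x,y) = |x−y|` and the intrinsic distance is `D_γ(x,y) = min(|x−y|, 1−|x−y|)`):
the chord/arc identity, the pointwise identity of the O'hara integrand with
`ρ^{−αp/2}·F(⟨γ',γ'⟩(x,y), 1, D_γ/ρ)`, and hence the equality of the O'hara energy
with the energy `Ẽ^{α,p}(γ')` (written over a fundamental domain for the torus). -/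
theorem ohara_energy_eq_tangent_energy (α p : ℝ) (hα : 0 < α) (hp : 0 < p)
    (γ g : ℝ → EuclideanSpace ℝ (Fin 3))
    (hper : Function.Periodic γ 1)
    (hderiv : ∀ x, HasDerivAt γ (g x) x)
    (hunit : ∀ x, ‖g x‖ = 1) :
    (∀ x y : ℝ, 0 < |x - y| → |x - y| < 1 / 2 →
      ‖γ x - γ y‖ ^ 2 / |x - y| ^ 2 =
        1 - (1 / 2) * (((y - x) ^ 2)⁻¹ * ∫ s in x..y, ∫ t in x..y, ‖g s - g t‖ ^ 2)) ∧
    (∀ x y : ℝ, 0 < |x - y| → |x - y| < 1 / 2 →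
      (‖γ x - γ y‖ ^ (-α) - (min |x - y| (1 - |x - y|)) ^ (-α)) ^ (p / 2) =
        |x - y| ^ (-(α * p / 2)) *
          FLag α p (((y - x) ^ 2)⁻¹ * ∫ s in x..y, ∫ t in x..y, ‖g s - g t‖ ^ 2) 1
            (min |x - y| (1 - |x - y|) / |x - y|)) ∧
    (∫ x in (0:ℝ)..1, ∫ y in (x - 1/2)..(x + 1/2),
        (‖γ x - γ y‖ ^ (-α) - (min |x - y| (1 - |x - y|)) ^ (-α)) ^ (p / 2)) =
      ∫ x in (0:ℝ)..1, ∫ y in (x - 1/2)..(x + 1/2),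
        |x - y| ^ (-(α * p / 2)) *
          FLag α p (((y - x) ^ 2)⁻¹ * ∫ s in x..y, ∫ t in x..y, ‖g s - g t‖ ^ 2) 1
            (min |x - y| (1 - |x - y|) / |x - y|) := by
  have hg : StronglyMeasurable g := by
    have hgd : g = deriv γ := funext fun x => ((hderiv x).deriv).symm
    rw [hgd]
    exact stronglyMeasurable_deriv γ
  have hswap : ∀ x y : ℝ, (∫ s in x..y, ∫ t in x..y, ‖g s - g t‖ ^ 2)
      = ∫ s in y..x, ∫ t in y..x, ‖g s - g t‖ ^ 2 := by
    intro x y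
    have hin : ∀ s : ℝ, (∫ t in x..y, ‖g s - g t‖ ^ 2)
        = -∫ t in y..x, ‖g s - g t‖ ^ 2 :=
      fun s => intervalIntegral.integral_symm y x
    calc (∫ s in x..y, ∫ t in x..y, ‖g s - g t‖ ^ 2)
        = ∫ s in x..y, -∫ t in y..x, ‖g s - g t‖ ^ 2 :=
          intervalIntegral.integral_congr fun s _ => hin s
      _ = -∫ s in x..y, ∫ t in y..x, ‖g s - g t‖ ^ 2 := intervalIntegral.integral_neg
      _ = -(-∫ s in y..x, ∫ t in y..x, ‖g s - g t‖ ^ 2) := by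
          rw [intervalIntegral.integral_symm y x]
      _ = _ := neg_neg _
  have h1 : ∀ x y : ℝ, 0 < |x - y| → |x - y| < 1 / 2 →
      ‖γ x - γ y‖ ^ 2 / |x - y| ^ 2 =
        1 - (1 / 2) * (((y - x) ^ 2)⁻¹ * ∫ s in x..y, ∫ t in x..y, ‖g s - g t‖ ^ 2) := by
    intro x y hpos _
    have hne : x ≠ y := by
      intro h
      simp [h] at hpos
    have habs : |x - y| ^ 2 = (y - x) ^ 2 := by
      rw [sq_abs]
      ring
    have hd : (0:ℝ) < (y - x) ^ 2 := habs ▸ pow_pos hpos 2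
    rcases lt_or_gt_of_ne hne with h | h
    · have key := chord_sq γ g hg hderiv hunit h
      rw [norm_sub_rev, habs, key]
      field_simp
    · have key := chord_sq γ g hg hderiv hunit h
      rw [habs, key, hswap x y, show (x - y) ^ 2 = (y - x) ^ 2 from by ring]
      field_simp
  have h2 : ∀ x y : ℝ, 0 < |x - y| → |x - y| < 1 / 2 →
      (‖γ x - γ y‖ ^ (-α) - (min |x - y| (1 - |x - y|)) ^ (-α)) ^ (p / 2) =
        |x - y| ^ (-(α * p / 2)) *
          FLag α p (((y - x) ^ 2)⁻¹ * ∫ s in x..y, ∫ t in x..y, ‖g s - g t‖ ^ 2) 1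
            (min |x - y| (1 - |x - y|) / |x - y|) := by
    intro x y hpos hlt
    have hmin : min |x - y| (1 - |x - y|) = |x - y| := min_eq_left (by linarith)
    have hρ : (0:ℝ) < |x - y| := hpos
    set a := ((y - x) ^ 2)⁻¹ * ∫ s in x..y, ∫ t in x..y, ‖g s - g t‖ ^ 2 with ha
    have hch := h1 x y hpos hlt
    set r := ‖γ x - γ y‖ with hr
    have hb : 1 - a / 2 = (r / |x - y|) ^ 2 := by
      rw [div_pow, hch]
      ring
    rw [hmin, div_self (ne_of_gt hρ)]
    unfold FLag
    rw [Real.one_rpow, hb]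
    have hu : (0:ℝ) ≤ r / |x - y| := div_nonneg (norm_nonneg _) hρ.le
    rw [← Real.rpow_two, ← Real.rpow_mul hu,
      show (2:ℝ) * -(α / 2) = -α from by ring,
      Real.div_rpow (norm_nonneg _) hρ.le]
    have hρα : (0:ℝ) < |x - y| ^ (-α) := Real.rpow_pos_of_pos hρ _
    have hfac : r ^ (-α) - |x - y| ^ (-α)
        = |x - y| ^ (-α) * (r ^ (-α) / |x - y| ^ (-α) - 1) := by
      field_simp
    rw [hfac, mul_rpow_left hρα, ← Real.rpow_mul hρ.le,
      show -α * (p / 2) = -(α * p / 2) from by ring]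
  refine ⟨h1, h2, ?_⟩
  apply intervalIntegral.integral_congr
  intro x _
  apply intervalIntegral.integral_congr_ae
  have hae : ∀ᵐ y : ℝ, y ≠ x ∧ y ≠ x + 1/2 := by
    refine Filter.Eventually.and ?_ ?_ <;>
    · rw [MeasureTheory.ae_iff]
      simp only [not_not, Set.setOf_eq_eq_singleton]
      exact measure_singleton _
  filter_upwards [hae] with y hy hyI
  have hI : y ∈ Set.Ioc (x - 1/2) (x + 1/2) := by
    rwa [Set.uIoc_of_le (by linarith)] at hyI
  have h0 : 0 < |x - y| := abs_pos.2 (sub_ne_zero.2 fun h => hy.1 h.symm)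
  have hlt : |x - y| < 1/2 := by
    rw [abs_sub_lt_iff]
    have h1' := hI.1
    have h2' := lt_of_le_of_ne hI.2 hy.2
    constructor <;> linarith
  exact h2 x y h0 hlt
end
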